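/- For n ≥ 2, the star K_{1,n−1} on n vertices satisfies th_Z(K_{1,n−1}) = n, and th_⌊Z⌋(K_{1,n−1}) ≤ ⌈2√(n−1) − 1⌉ + 1. -/

import Mathlib

open SimpleGraph

namespace ZFT

variable {V : Type*} {α : Type*} {β : Type*}

/-! ### Standard zero forcing (simultaneous propagation) -/

/-- One round of simultaneous standard zero forcing: a blue vertex forces its
unique white neighbor. -/
def zStep (G : SimpleGraph V) (S : Set V) : Set V :=
  S ∪ {w | ∃ u ∈ S, G.Adj u w ∧ ∀ x, G.Adj u x → x ∉ S → x = w}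

/-- `B` is a standard zero forcing set of `G`. -/
def IsZeroForcingSet (G : SimpleGraph V) (B : Set V) : Prop :=
  ∃ t : ℕ, (zStep G)^[t] B = Set.univ

/-- The standard propagation time `pt_Z(G;B)` (`⊤` if `B` is not a zero forcing set). -/
noncomputable def ptZ (G : SimpleGraph V) (B : Set V) : ℕ∞ :=
  sInf {n : ℕ∞ | ∃ t : ℕ, n = t ∧ (zStep G)^[t] B = Set.univ}

/-- The standard throttling number `th_Z(G;B) = |B| + pt_Z(G;B)`. -/
noncomputable def thZ (G : SimpleGraph V) (B : Set V) : ℕ∞ :=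
  (B.ncard : ℕ∞) + ptZ G B

/-- The standard throttling number `th_Z(G)`. -/
noncomputable def thZgraph (G : SimpleGraph V) : ℕ∞ :=
  sInf {n : ℕ∞ | ∃ B : Set V, IsZeroForcingSet G B ∧ n = thZ G B}

/-- The standard zero forcing number `Z(G)`. -/
noncomputable def Znum (G : SimpleGraph V) : ℕ :=
  sInf {k : ℕ | ∃ B : Set V, IsZeroForcingSet G B ∧ B.ncard = k}

/-- The standard propagation time `pt_Z(G)`, minimized over minimum zero forcing sets. -/
noncomputable def ptZgraph (G : SimpleGraph V) : ℕ∞ :=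
  sInf {n : ℕ∞ | ∃ B : Set V, IsZeroForcingSet G B ∧ B.ncard = Znum G ∧ n = ptZ G B}

/-! ### Sets of standard forces -/

/-- Validity of a single standard force `u → w` when `blue` is the blue set. -/
def zForceValid (G : SimpleGraph V) (blue : Set V) (u w : V) : Prop :=
  u ∈ blue ∧ w ∉ blue ∧ G.Adj u w ∧ ∀ x, G.Adj u x → x ∉ blue → x = w

/-- Validity of a chronological list of standard forces starting from a blue set. -/
def zValidList (G : SimpleGraph V) : Set V → List (V × V) → Prop
  | _, [] => True
  | blue, p :: L => zForceValid G blue p.1 p.2 ∧ zValidList G (insert p.2 blue) L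

/-- The blue set after performing all forces in a list, starting from `B`. -/
def endBlue (B : Set V) (L : List (V × V)) : Set V :=
  B ∪ {w | ∃ u, (u, w) ∈ L}

/-- The set of vertices that have performed a force in a list. -/
def endForced (L : List (V × V)) : Set V := {u | ∃ w, (u, w) ∈ L}

/-- `F` is a set of standard forces of `B` in `G` (recorded from a maximal
chronological list of forces). -/
def IsZForceSet (G : SimpleGraph V) (B : Set V) (F : Set (V × V)) : Prop :=
  ∃ L : List (V × V), zValidList G B L ∧
    (∀ u w, ¬ zForceValid G (endBlue B L) u w) ∧ F = {p | p ∈ L}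

/-- The set of blue vertices at time `t` when the forces of `F` are performed at the
earliest possible time steps, starting from `B` blue. -/
def zBlueAt (G : SimpleGraph V) (F : Set (V × V)) (B : Set V) : ℕ → Set V
  | 0 => B
  | t + 1 =>
      zBlueAt G F B t ∪ {w | ∃ v, (v, w) ∈ F ∧ zForceValid G (zBlueAt G F B t) v w}

/-- The standard propagation time `pt_Z(G;F)` of a set of forces `F` of `B`. -/
noncomputable def ptZofF (G : SimpleGraph V) (F : Set (V × V)) (B : Set V) : ℕ∞ :=
  sInf {n : ℕ∞ | ∃ t : ℕ, n = t ∧ zBlueAt G F B t = Set.univ}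

/-! ### `⌊Z⌋` (minor monotone floor) forcing -/

/-- Validity of a single `⌊Z⌋` force `u → w`: `u` is blue and has not yet forced, `w`
is white, and either `w` is the unique white neighbor of `u`, or all neighbors of `u`
are blue (a hop). -/
def zfForceValid (G : SimpleGraph V) (blue forced : Set V) (u w : V) : Prop :=
  u ∈ blue ∧ w ∉ blue ∧ u ∉ forced ∧
    ((G.Adj u w ∧ ∀ x, G.Adj u x → x ∉ blue → x = w) ∨ ∀ x, G.Adj u x → x ∈ blue)

/-- Validity of a chronological list of `⌊Z⌋` forces. -/
def zfValidList (G : SimpleGraph V) : Set V → Set V → List (V × V) → Prop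
  | _, _, [] => True
  | blue, forced, p :: L =>
      zfForceValid G blue forced p.1 p.2 ∧
        zfValidList G (insert p.2 blue) (insert p.1 forced) L

/-- `F` is a set of `⌊Z⌋` forces of `B` in `G` (recorded from a maximal chronological
list of `⌊Z⌋` forces starting with `B` blue). -/
def IsZFForceSet (G : SimpleGraph V) (B : Set V) (F : Set (V × V)) : Prop :=
  ∃ L : List (V × V), zfValidList G B ∅ L ∧
    (∀ u w, ¬ zfForceValid G (endBlue B L) (endForced L) u w) ∧ F = {p | p ∈ L}

/-- The set of blue vertices at time `t` when the `⌊Z⌋` forces of `F` are performed at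
the earliest possible time steps, starting from `B` blue. -/
def zfBlueAt (G : SimpleGraph V) (F : Set (V × V)) (B : Set V) : ℕ → Set V
  | 0 => B
  | t + 1 =>
      zfBlueAt G F B t ∪
        {w | ∃ v, (v, w) ∈ F ∧ v ∈ zfBlueAt G F B t ∧ w ∉ zfBlueAt G F B t ∧
          (∀ w', (v, w') ∈ F → w' ∈ zfBlueAt G F B t → w' ∈ B) ∧
          ((G.Adj v w ∧ ∀ x, G.Adj v x → x ∉ zfBlueAt G F B t → x = w) ∨
            ∀ x, G.Adj v x → x ∈ zfBlueAt G F B t)}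

/-- The `⌊Z⌋` propagation time `pt_⌊Z⌋(G;F)` of a set of `⌊Z⌋` forces `F` of `B`. -/
noncomputable def ptZFofF (G : SimpleGraph V) (F : Set (V × V)) (B : Set V) : ℕ∞ :=
  sInf {n : ℕ∞ | ∃ t : ℕ, n = t ∧ zfBlueAt G F B t = Set.univ}

/-- The `⌊Z⌋` propagation time `pt_⌊Z⌋(G;B)`, minimized over sets of `⌊Z⌋` forces of `B`. -/
noncomputable def ptZF (G : SimpleGraph V) (B : Set V) : ℕ∞ :=
  sInf {n : ℕ∞ | ∃ F : Set (V × V), IsZFForceSet G B F ∧ n = ptZFofF G F B}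

/-- The `⌊Z⌋` throttling number `th_⌊Z⌋(G;B) = |B| + pt_⌊Z⌋(G;B)`. -/
noncomputable def thZF (G : SimpleGraph V) (B : Set V) : ℕ∞ :=
  (B.ncard : ℕ∞) + ptZF G B

/-- The `⌊Z⌋` throttling number `th_⌊Z⌋(G)`, minimized over all `B ⊆ V(G)`. -/
noncomputable def thZFgraph (G : SimpleGraph V) : ℕ∞ :=
  sInf {n : ℕ∞ | ∃ B : Set V, n = thZF G B}

/-- `B` is a `⌊Z⌋` forcing set of `G`. -/
def IsZFForcingSet (G : SimpleGraph V) (B : Set V) : Prop :=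
  ∃ F : Set (V × V), IsZFForceSet G B F ∧ B ∪ {w | ∃ u, (u, w) ∈ F} = Set.univ

/-- The `⌊Z⌋` forcing number `⌊Z⌋(G)`. -/
noncomputable def ZFnum (G : SimpleGraph V) : ℕ :=
  sInf {k : ℕ | ∃ B : Set V, IsZFForcingSet G B ∧ B.ncard = k}

/-- The `⌊Z⌋` propagation time `pt_⌊Z⌋(G)`, minimized over minimum `⌊Z⌋` forcing sets. -/
noncomputable def ptZFgraph (G : SimpleGraph V) : ℕ∞ :=
  sInf {n : ℕ∞ | ∃ B : Set V, IsZFForcingSet G B ∧ B.ncard = ZFnum G ∧ n = ptZF G B}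

/-! ### Contractions, minors, and products -/

/-- The graph obtained from `H` by contracting (all) the edges in `C`: its vertices are
the connected components of the spanning subgraph of `H` with edge set `C ∩ E(H)`, and
two distinct components are adjacent iff `H` has an edge between them. -/
def contractEdges (H : SimpleGraph α) (C : Set (Sym2 α)) :
    SimpleGraph (SimpleGraph.fromEdgeSet C ⊓ H).ConnectedComponent where
  Adj c d := c ≠ d ∧ ∃ a b, H.Adj a b ∧
      (SimpleGraph.fromEdgeSet C ⊓ H).connectedComponentMk a = c ∧
      (SimpleGraph.fromEdgeSet C ⊓ H).connectedComponentMk b = d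
  symm := by
    refine ⟨?_⟩
    rintro c d ⟨hcd, a, b, hab, ha, hb⟩
    exact ⟨hcd.symm, b, a, hab.symm, hb, ha⟩
  loopless := ⟨fun c h => h.1 rfl⟩

/-- `G` is a minor of `H`: `G` is isomorphic to a subgraph of a graph obtained from an
induced subgraph of `H` by contracting a set of edges. -/
def IsMinor (G : SimpleGraph β) (H : SimpleGraph α) : Prop :=
  ∃ (s : Set α) (C : Set (Sym2 s))
    (G'' : SimpleGraph (SimpleGraph.fromEdgeSet C ⊓ H.induce s).ConnectedComponent),
      G'' ≤ contractEdges (H.induce s) C ∧ Nonempty (G ≃g G'')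

/-- The Cartesian product `K_a □ P_{b+1}`. -/
def prodKP (a b : ℕ) : SimpleGraph (Fin a × Fin (b + 1)) :=
  (⊤ : SimpleGraph (Fin a)) □ SimpleGraph.pathGraph (b + 1)

/-- The path edges of `K_a □ P_{b+1}` (edges within the copies of `P_{b+1}`). -/
def pathEdges (a b : ℕ) : Set (Sym2 (Fin a × Fin (b + 1))) :=
  {e | ∃ (i : Fin a) (j j' : Fin (b + 1)),
    (SimpleGraph.pathGraph (b + 1)).Adj j j' ∧ e = s((i, j), (i, j'))}

/-- The complete edges of `K_a □ P_{b+1}` (edges within the copies of `K_a`). -/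
def completeEdges (a b : ℕ) : Set (Sym2 (Fin a × Fin (b + 1))) :=
  {e | ∃ (i i' : Fin a) (j : Fin (b + 1)), i ≠ i' ∧ e = s((i, j), (i', j))}

/-- The star `K_{1,n-1}` on `n` vertices: vertex `0` is adjacent to all others. -/
def starGraph (n : ℕ) : SimpleGraph (Fin n) where
  Adj i j := i ≠ j ∧ ((i : ℕ) = 0 ∨ (j : ℕ) = 0)
  symm := by refine ⟨?_⟩; rintro i j ⟨h1, h2⟩; exact ⟨h1.symm, h2.symm⟩
  loopless := ⟨fun i h => h.1 rfl⟩

/-- The independence number `α(G)`. -/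
noncomputable def indepNum (G : SimpleGraph V) : ℕ :=
  sSup {k : ℕ | ∃ s : Set V, (∀ a ∈ s, ∀ b ∈ s, a ≠ b → ¬ G.Adj a b) ∧ s.ncard = k}



/-! ### Auxiliary lemmas for Statement 19 -/

lemma star_adj {n : ℕ} {i j : Fin n} :
    (starGraph n).Adj i j ↔ i ≠ j ∧ ((i : ℕ) = 0 ∨ (j : ℕ) = 0) := Iff.rfl

lemma star_newcard {n : ℕ} (S : Set (Fin n)) :
    (zStep (starGraph n) S).ncard ≤ S.ncard + 1 := by
  set T := {w | ∃ u ∈ S, (starGraph n).Adj u w ∧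
      ∀ x, (starGraph n).Adj u x → x ∉ S → x = w} with hT
  have h1 : zStep (starGraph n) S = S ∪ (T \ S) := by
    rw [Set.union_diff_self]; rfl
  have h2 : (T \ S).ncard ≤ 1 := by
    rw [Set.ncard_le_one (Set.toFinite _)]
    rintro w1 ⟨⟨u1, hu1, hadj1, huniq1⟩, hw1⟩ w2 ⟨⟨u2, hu2, hadj2, huniq2⟩, hw2⟩
    rcases (star_adj.mp hadj1).2 with h10 | h10
    · rcases (star_adj.mp hadj2).2 with h20 | h20
      · have hu : u2 = u1 := Fin.ext (by omega)
        subst hu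
        exact (huniq1 w2 hadj2 hw2).symm
      · exfalso
        have : w2 = u1 := Fin.ext (by omega)
        rw [this] at hw2; exact hw2 hu1
    · rcases (star_adj.mp hadj2).2 with h20 | h20
      · exfalso
        have : w1 = u2 := Fin.ext (by omega)
        rw [this] at hw1; exact hw1 hu2
      · exact Fin.ext (by omega)
  calc (zStep (starGraph n) S).ncard = (S ∪ (T \ S)).ncard := by rw [h1]
    _ ≤ S.ncard + (T \ S).ncard := Set.ncard_union_le _ _
    _ ≤ S.ncard + 1 := by omega

lemma star_iter_card {n : ℕ} (B : Set (Fin n)) (t : ℕ) :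
    ((zStep (starGraph n))^[t] B).ncard ≤ B.ncard + t := by
  induction t with
  | zero => simp
  | succ t ih =>
      rw [Function.iterate_succ_apply']
      calc (zStep (starGraph n) ((zStep (starGraph n))^[t] B)).ncard
          ≤ ((zStep (starGraph n))^[t] B).ncard + 1 := star_newcard _
        _ ≤ B.ncard + (t + 1) := by omega

lemma thZ_star {n : ℕ} (hn : 2 ≤ n) : thZgraph (starGraph n) = (n : ℕ∞) := by
  apply le_antisymm
  · apply sInf_le
    refine ⟨Set.univ, ⟨0, by simp⟩, ?_⟩
    have hpt : ptZ (starGraph n) (Set.univ : Set (Fin n)) = 0 := by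
      refine le_antisymm (sInf_le ⟨0, by simp, by simp⟩) (zero_le)
    rw [thZ, hpt, add_zero, Set.ncard_univ, Nat.card_eq_fintype_card, Fintype.card_fin]
  · apply le_sInf
    rintro m ⟨B, hB, rfl⟩
    classical
    have ht0 := Nat.find_spec hB
    set t0 := Nat.find hB with ht0def
    have hpt : ptZ (starGraph n) B = (t0 : ℕ∞) := by
      refine le_antisymm (sInf_le ⟨t0, rfl, ht0⟩) (le_sInf ?_)
      rintro m ⟨t, rfl, ht⟩
      exact_mod_cast Nat.find_min' hB ht
    rw [thZ, hpt]
    have hcard : n ≤ B.ncard + t0 := by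
      have h := star_iter_card B t0
      rw [ht0, Set.ncard_univ, Nat.card_eq_fintype_card, Fintype.card_fin] at h
      exact h
    exact_mod_cast hcard

lemma pair_exists (N : ℕ) (hN : 1 ≤ N) :
    ∃ a c : ℕ, 1 ≤ a ∧ 1 ≤ c ∧ N ≤ a * c ∧ ((a : ℝ) + c - 1) < 2 * Real.sqrt N := by
  set k := N.sqrt with hk
  have hle : k * k ≤ N := by have h := Nat.sqrt_le' N; rwa [pow_two] at h
  have hlt : N < (k + 1) * (k + 1) := by have h := Nat.lt_succ_sqrt' N; rwa [pow_two] at h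
  have hk1 : 1 ≤ k := by
    rcases Nat.eq_zero_or_pos k with h | h
    · rw [h] at hlt; simp at hlt; omega
    · exact h
  by_cases h0 : N = k * k
  · refine ⟨k, k, hk1, hk1, by omega, ?_⟩
    have hs : Real.sqrt N = (k : ℝ) := by
      rw [h0]; push_cast; exact Real.sqrt_mul_self (by positivity)
    rw [hs]
    have : (1 : ℝ) ≤ (k : ℝ) := by exact_mod_cast hk1
    linarith
  · have hklt : k * k < N := lt_of_le_of_ne hle (fun h => h0 h.symm)
    by_cases h1 : N ≤ k * k + k
    · refine ⟨k + 1, k, by omega, hk1, by nlinarith, ?_⟩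
      have hsq : (k : ℝ) < Real.sqrt N := by
        rw [Real.lt_sqrt (by positivity)]
        have : ((k * k : ℕ) : ℝ) < (N : ℝ) := by exact_mod_cast hklt
        push_cast at this ⊢
        nlinarith
      push_cast
      linarith
    · refine ⟨k + 1, k + 1, by omega, by omega, by nlinarith, ?_⟩
      have hsq : (k : ℝ) + 1 / 2 < Real.sqrt N := by
        rw [Real.lt_sqrt (by positivity)]
        have h2 : ((k * k + k + 1 : ℕ) : ℝ) ≤ (N : ℝ) := by exact_mod_cast (by omega : k * k + k + 1 ≤ N)
        push_cast at h2 ⊢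
        nlinarith
      push_cast
      linarith

lemma ptZF_univ {n : ℕ} (hn : 2 ≤ n) :
    ptZF (starGraph n) (Set.univ : Set (Fin n)) = 0 := by
  refine le_antisymm (sInf_le ?_) (zero_le)
  show ∃ F, IsZFForceSet (starGraph n) Set.univ F ∧
      (0 : ℕ∞) = ptZFofF (starGraph n) F Set.univ
  refine ⟨∅, ⟨[], trivial, ?_, by ext p; simp⟩, ?_⟩
  · intro u w h
    apply h.2.1
    show w ∈ endBlue (Set.univ : Set (Fin n)) []
    rw [endBlue]
    exact Set.mem_union_left _ (Set.mem_univ w)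
  · have h0 : (0 : ℕ∞) ∈ {m : ℕ∞ | ∃ t : ℕ, m = (t : ℕ∞) ∧
        zfBlueAt (starGraph n) ∅ (Set.univ : Set (Fin n)) t = Set.univ} :=
      ⟨0, by simp, rfl⟩
    exact (le_antisymm (sInf_le h0) (zero_le)).symm

lemma thZF_star_le {n : ℕ} (hn : 2 ≤ n) (a c : ℕ) (ha : 1 ≤ a) (hc : 1 ≤ c)
    (hac : n - 1 ≤ a * c) : thZFgraph (starGraph n) ≤ ((a + c : ℕ) : ℕ∞) := by
  by_cases hbig : n - 1 ≤ a
  · -- use B = univ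
    have h1 : thZFgraph (starGraph n) ≤ thZF (starGraph n) (Set.univ : Set (Fin n)) :=
      sInf_le ⟨Set.univ, rfl⟩
    have h2 : thZF (starGraph n) (Set.univ : Set (Fin n)) = (n : ℕ∞) := by
      rw [thZF, ptZF_univ hn, add_zero, Set.ncard_univ, Nat.card_eq_fintype_card,
        Fintype.card_fin]
    refine le_trans h1 (le_trans h2.le ?_)
    exact_mod_cast (by omega : n ≤ a + c)
  · push_neg at hbig
    have hn0 : 0 < n := by omega
    set f : ℕ → Fin n := fun m => ⟨m % n, Nat.mod_lt m hn0⟩ with hfdef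
    have hf : ∀ m, m ≤ n - 1 → ((f m : ℕ)) = m := by
      intro m hm; exact Nat.mod_eq_of_lt (by omega)
    have hfinj : ∀ i j, i ≤ n - 1 → j ≤ n - 1 → f i = f j → i = j := by
      intro i j hi hj h
      have := congrArg Fin.val h
      rwa [hf i hi, hf j hj] at this
    set L : List (Fin n × Fin n) :=
      (List.range (n - 1 - a)).map (fun j => (f (0 + 1 + j), f (0 + 1 + j + a))) with hLdef
    set F : Set (Fin n × Fin n) := {p | p ∈ L} with hFdef
    set B : Set (Fin n) := {v : Fin n | (v : ℕ) ≤ a} with hBdef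
    have hmemL : ∀ p : Fin n × Fin n,
        p ∈ L ↔ ∃ i, 1 ≤ i ∧ i + a ≤ n - 1 ∧ p = (f i, f (i + a)) := by
      intro p
      rw [hLdef]
      simp only [List.mem_map, List.mem_range]
      constructor
      · rintro ⟨j, hj, rfl⟩
        exact ⟨j + 1, by omega, by omega, by rw [show 0 + 1 + j = j + 1 from by omega]⟩
      · rintro ⟨i, h1, h2, rfl⟩
        refine ⟨i - 1, by omega, ?_⟩
        rw [show 0 + 1 + (i - 1) = i from by omega]
    -- validity of the chronological list
    have hvalid : ∀ d i0, i0 + d ≤ n - 1 - a →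
        zfValidList (starGraph n) {v : Fin n | (v : ℕ) ≤ a + i0}
          {v : Fin n | 1 ≤ (v : ℕ) ∧ (v : ℕ) ≤ i0}
          ((List.range d).map (fun j => (f (i0 + 1 + j), f (i0 + 1 + j + a)))) := by
      intro d
      induction d with
      | zero => intro i0 _; simp [zfValidList]
      | succ d ih =>
          intro i0 hi0
          have hio1 : i0 + 1 ≤ n - 1 - a := by omega
          have hioa : i0 + 1 + a ≤ n - 1 := by omega
          rw [List.range_succ_eq_map, List.map_cons, List.map_map]
          have hv1 : ((f (i0 + 1 + 0)) : ℕ) = i0 + 1 := by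
            rw [show i0 + 1 + 0 = i0 + 1 from rfl]; exact hf _ (by omega)
          have hv2 : ((f (i0 + 1 + 0 + a)) : ℕ) = i0 + 1 + a := by
            rw [show i0 + 1 + 0 + a = i0 + 1 + a from rfl]; exact hf _ hioa
          refine ⟨⟨?_, ?_, ?_, Or.inr ?_⟩, ?_⟩
          · show ((f (i0 + 1 + 0)) : ℕ) ≤ a + i0 + 0 + 1 - 1
            omega
          · show ¬ ((f (i0 + 1 + 0 + a)) : ℕ) ≤ a + i0
            omega
          · show ¬ (1 ≤ ((f (i0 + 1 + 0)) : ℕ) ∧ ((f (i0 + 1 + 0)) : ℕ) ≤ i0)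
            omega
          · show ∀ x, (starGraph n).Adj (f (i0 + 1 + 0)) x →
                x ∈ {v : Fin n | (v : ℕ) ≤ a + i0}
            intro x hx
            rcases (star_adj.mp hx).2 with h0 | h0
            · exfalso; rw [hv1] at h0; omega
            · show (x : ℕ) ≤ a + i0
              omega
          · -- tail
            have hBl : insert (f (i0 + 1 + 0 + a)) {v : Fin n | (v : ℕ) ≤ a + i0}
                = {v : Fin n | (v : ℕ) ≤ a + (i0 + 1)} := by
              ext v
              simp only [Set.mem_insert_iff, Set.mem_setOf_eq]
              constructor
              · rintro (rfl | h) <;> omega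
              · intro h
                by_cases hcase : (v : ℕ) ≤ a + i0
                · exact Or.inr hcase
                · left
                  apply Fin.ext
                  rw [hv2]; omega
            have hFo : insert (f (i0 + 1 + 0)) {v : Fin n | 1 ≤ (v : ℕ) ∧ (v : ℕ) ≤ i0}
                = {v : Fin n | 1 ≤ (v : ℕ) ∧ (v : ℕ) ≤ i0 + 1} := by
              ext v
              simp only [Set.mem_insert_iff, Set.mem_setOf_eq]
              constructor
              · rintro (rfl | h) <;> omega
              · rintro ⟨h1, h2⟩
                by_cases hcase : (v : ℕ) ≤ i0
                · exact Or.inr ⟨h1, hcase⟩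
                · left
                  apply Fin.ext
                  rw [hv1]; omega
            have hmap : (List.range d).map
                  ((fun j => (f (i0 + 1 + j), f (i0 + 1 + j + a))) ∘ Nat.succ)
                = (List.range d).map
                  (fun j => (f (i0 + 1 + 1 + j), f (i0 + 1 + 1 + j + a))) := by
              apply List.map_congr_left
              intro j _
              simp only [Function.comp_apply]
              rw [show i0 + 1 + j.succ = i0 + 1 + 1 + j from by omega]
            rw [hBl, hFo, hmap]
            exact ih (i0 + 1) (by omega)
    have hvalid0 : zfValidList (starGraph n) B ∅ L := by
      have h := hvalid (n - 1 - a) 0 (by omega)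
      have hBeq : {v : Fin n | (v : ℕ) ≤ a + 0} = B := by rw [hBdef]; simp
      have hFoeq : {v : Fin n | 1 ≤ (v : ℕ) ∧ (v : ℕ) ≤ 0} = (∅ : Set (Fin n)) := by
        ext v; simp; omega
      rw [hBeq, hFoeq] at h
      exact h
    have hend : endBlue B L = Set.univ := by
      ext v
      simp only [Set.mem_univ, iff_true]
      rw [endBlue]
      by_cases hv : (v : ℕ) ≤ a
      · exact Set.mem_union_left _ hv
      · apply Set.mem_union_right
        have hvlt : (v : ℕ) ≤ n - 1 := by have := v.isLt; omega
        refine ⟨f ((v : ℕ) - a), (hmemL _).mpr ⟨(v : ℕ) - a, by omega, by omega, ?_⟩⟩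
        rw [show (v : ℕ) - a + a = (v : ℕ) from by omega]
        have : f (v : ℕ) = v := Fin.ext (hf _ hvlt)
        rw [this]
    have hmax : ∀ u w, ¬ zfForceValid (starGraph n) (endBlue B L) (endForced L) u w := by
      intro u w h
      rw [hend] at h
      exact h.2.1 (Set.mem_univ w)
    have hforce : IsZFForceSet (starGraph n) B F := ⟨L, hvalid0, hmax, rfl⟩
    -- blue set at each time
    have hblue : ∀ m, zfBlueAt (starGraph n) F B m = {v : Fin n | (v : ℕ) ≤ a + a * m} := by
      intro m
      induction m with
      | zero => rw [hBdef]; simp [zfBlueAt]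
      | succ m ih =>
          have hmul : a * (m + 1) = a * m + a := by ring
          rw [zfBlueAt, ih]
          ext v
          simp only [Set.mem_union, Set.mem_setOf_eq]
          constructor
          · rintro (hv | ⟨u, huF, huB, hwB, _, _⟩)
            · omega
            · obtain ⟨i, hi1, hi2, hpe⟩ := (hmemL _).mp huF
              have hu : u = f i := congrArg Prod.fst hpe
              have hv : v = f (i + a) := congrArg Prod.snd hpe
              rw [hu, hf i (by omega)] at huB
              rw [hv, hf (i + a) (by omega)]
              omega
          · intro hv
            by_cases hcase : (v : ℕ) ≤ a + a * m
            · exact Or.inl hcase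
            · right
              have hvlt : (v : ℕ) ≤ n - 1 := by have := v.isLt; omega
              have hfv : ((f ((v : ℕ) - a)) : ℕ) = (v : ℕ) - a := hf _ (by omega)
              have hvmem : (f ((v : ℕ) - a), v) ∈ F := by
                refine (hmemL _).mpr ⟨(v : ℕ) - a, by omega, by omega, ?_⟩
                rw [show (v : ℕ) - a + a = (v : ℕ) from by omega]
                have : f (v : ℕ) = v := Fin.ext (hf _ hvlt)
                rw [this]
              refine ⟨f ((v : ℕ) - a), hvmem, ?_, ?_, ?_, Or.inr ?_⟩
              · show ((f ((v : ℕ) - a)) : ℕ) ≤ a + a * m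
                omega
              · show ¬ ((v : ℕ) ≤ a + a * m)
                omega
              · intro w' hw' hw'm
                exfalso
                obtain ⟨i', h1', h2', hpe'⟩ := (hmemL _).mp hw'
                have he1 : f ((v : ℕ) - a) = f i' := congrArg Prod.fst hpe'
                have hii : (v : ℕ) - a = i' := hfinj _ _ (by omega) (by omega) he1
                have he2 : w' = f (i' + a) := congrArg Prod.snd hpe'
                rw [he2, hf (i' + a) (by omega)] at hw'm
                omega
              · intro x hx
                rcases (star_adj.mp hx).2 with h0 | h0
                · omega
                · show (x : ℕ) ≤ a + a * m
                  omega
    have huniv : zfBlueAt (starGraph n) F B (c - 1) = Set.univ := by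
      rw [hblue]
      ext v
      simp only [Set.mem_setOf_eq, Set.mem_univ, iff_true]
      have h1 : a + a * (c - 1) = a * c := by
        obtain ⟨c', rfl⟩ : ∃ c', c = c' + 1 := ⟨c - 1, by omega⟩
        simp [Nat.mul_succ]; ring
      have := v.isLt
      omega
    have hptF : ptZFofF (starGraph n) F B ≤ ((c - 1 : ℕ) : ℕ∞) :=
      sInf_le ⟨c - 1, rfl, huniv⟩
    have hpt : ptZF (starGraph n) B ≤ ((c - 1 : ℕ) : ℕ∞) :=
      le_trans (sInf_le ⟨F, hforce, rfl⟩) hptF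
    have han : a + 1 ≤ n := by omega
    have hcard : B.ncard = a + 1 := by
      have himg : B = Fin.castLE han '' Set.univ := by
        ext v
        simp only [Set.image_univ, Set.mem_range, hBdef, Set.mem_setOf_eq]
        constructor
        · intro hv
          exact ⟨⟨(v : ℕ), by omega⟩, Fin.ext rfl⟩
        · rintro ⟨i, rfl⟩
          have := i.isLt
          simp only [Fin.coe_castLE]
          omega
      rw [himg, Set.ncard_image_of_injective _ (Fin.castLE_injective han),
        Set.ncard_univ, Nat.card_eq_fintype_card, Fintype.card_fin]
    have hthB : thZF (starGraph n) B ≤ ((a + c : ℕ) : ℕ∞) := by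
      rw [thZF, hcard]
      calc ((a + 1 : ℕ) : ℕ∞) + ptZF (starGraph n) B
          ≤ ((a + 1 : ℕ) : ℕ∞) + ((c - 1 : ℕ) : ℕ∞) := add_le_add_right hpt _
        _ = ((a + c : ℕ) : ℕ∞) := by
            rw [← Nat.cast_add]
            congr 1
            omega
    exact le_trans (sInf_le ⟨B, rfl⟩) hthB

/-- for `n ≥ 2`, `th_Z(K_{1,n−1}) = n` and
`th_⌊Z⌋(K_{1,n−1}) ≤ ⌈2√(n−1) − 1⌉ + 1`. -/
theorem stmt19 (n : ℕ) (hn : 2 ≤ n) :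
    thZgraph (starGraph n) = (n : ℕ∞) ∧
      thZFgraph (starGraph n) ≤
        ((⌈2 * Real.sqrt ((n : ℝ) - 1) - 1⌉).toNat : ℕ∞) + 1 := by
  constructor
  · exact thZ_star hn
  · obtain ⟨a, c, ha, hc, hac, hreal⟩ := pair_exists (n - 1) (by omega)
    have hcast : ((n - 1 : ℕ) : ℝ) = (n : ℝ) - 1 := by
      rw [Nat.cast_sub (by omega : 1 ≤ n)]; norm_num
    rw [hcast] at hreal
    set z : ℤ := ⌈2 * Real.sqrt ((n : ℝ) - 1) - 1⌉ with hz
    have hz1 : ((a : ℤ) + c - 2) < z := by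
      rw [hz, Int.lt_ceil]
      push_cast
      linarith
    have hz2 : ((a + c - 1 : ℕ) : ℤ) ≤ z := by push_cast; omega
    have hz3 : a + c - 1 ≤ z.toNat := by
      have h := Int.toNat_le_toNat hz2
      rwa [Int.toNat_natCast] at h
    have hfin : a + c ≤ z.toNat + 1 := by omega
    refine le_trans (thZF_star_le hn a c ha hc hac) ?_
    have : ((a + c : ℕ) : ℕ∞) ≤ ((z.toNat + 1 : ℕ) : ℕ∞) := by exact_mod_cast hfin
    refine le_trans this ?_
    rw [Nat.cast_add, Nat.cast_one]

end ZFT
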